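/- Let A be a matrix in SL(3,ℤ) (integer entries, determinant 1) whose characteristic polynomial has an irrational real root. Then the three eigenvalues of A (over ℂ, counted with multiplicity) are pairwise distinct. -/
import Mathlib

theorem sl3_irrational_root_distinct_eigenvalues
    (A : Matrix (Fin 3) (Fin 3) ℤ) (hdet : A.det = 1)
    (hroot : ∃ r : ℝ, Irrational r ∧
      Polynomial.aeval r (A.charpoly.map (Int.castRingHom ℝ)) = 0) :
    ((A.charpoly.map (Int.castRingHom ℂ)).roots).Nodup := by
  obtain ⟨r, hirr, hr⟩ := hroot
  set p := A.charpoly with hp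
  have hmonic : p.Monic := A.charpoly_monic
  have hdeg : p.natDegree = 3 := by
    rw [hp, Matrix.charpoly_natDegree_eq_dim]; simp
  -- the rational version
  set pQ : Polynomial ℚ := p.map (Int.castRingHom ℚ) with hpQ
  have hmonicQ : pQ.Monic := hmonic.map _
  have hpQ0 : pQ ≠ 0 := hmonicQ.ne_zero
  have hdegQ : pQ.natDegree = 3 := by
    rw [hpQ, hmonic.natDegree_map, hdeg]
  -- r is a root of pQ viewed over ℝ
  have hr' : Polynomial.aeval r pQ = 0 := by
    rw [hpQ, (RingHom.ext_int _ _ : Int.castRingHom ℚ = algebraMap ℤ ℚ),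
      Polynomial.aeval_map_algebraMap]
    rwa [(RingHom.ext_int _ _ : Int.castRingHom ℝ = algebraMap ℤ ℝ),
      Polynomial.aeval_map_algebraMap] at hr
  have hint : IsIntegral ℚ r := ⟨pQ, hmonicQ, by
    rwa [← Polynomial.aeval_def]⟩
  set m := minpoly ℚ r with hm
  have hmirr : Irreducible m := minpoly.irreducible hint
  have hmdvd : m ∣ pQ := minpoly.dvd ℚ r hr'
  have hm0 : m ≠ 0 := hmirr.ne_zero
  have hmdeg2 : 2 ≤ m.natDegree := by
    have hpos : 0 < m.natDegree := minpoly.natDegree_pos hint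
    have h1 : m.natDegree ≠ 1 := by
      intro h'
      have : m.degree = 1 := by
        rw [Polynomial.degree_eq_natDegree hm0, h']; rfl
      obtain ⟨q, hq⟩ := minpoly.degree_eq_one_iff.mp this
      exact hirr ⟨q, hq⟩
    omega
  obtain ⟨c, hc⟩ := hmdvd
  have hc0 : c ≠ 0 := by
    rintro rfl; rw [mul_zero] at hc; exact hpQ0 hc
  have hcdeg : c.natDegree ≤ 1 := by
    have : m.natDegree + c.natDegree = 3 := by
      rw [← Polynomial.natDegree_mul hm0 hc0, ← hc, hdegQ]
    omega
  have hcsf : Squarefree c ∧ ¬ m ∣ c := by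
    constructor
    · rcases Nat.lt_or_ge c.natDegree 1 with h | h
      · have : c.natDegree = 0 := by omega
        have : IsUnit c := by
          rw [Polynomial.isUnit_iff_degree_eq_zero,
            Polynomial.degree_eq_natDegree hc0, this]; rfl
        exact this.squarefree
      · have : c.natDegree = 1 := le_antisymm hcdeg h
        have : c.degree = 1 := by
          rw [Polynomial.degree_eq_natDegree hc0, this]; rfl
        exact (Polynomial.irreducible_of_degree_eq_one this).squarefree
    · intro hdvd
      have := Polynomial.natDegree_le_of_dvd hdvd hc0
      omega
  have hsfQ : Squarefree pQ := by
    rw [hc, squarefree_mul_iff]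
    exact ⟨hmirr.isRelPrime_iff_not_dvd.mpr hcsf.2, hmirr.squarefree, hcsf.1⟩
  have hsepQ : pQ.Separable := PerfectField.separable_iff_squarefree.mpr hsfQ
  have hsepC : (pQ.map (algebraMap ℚ ℂ)).Separable := hsepQ.map
  have hmap : pQ.map (algebraMap ℚ ℂ) = p.map (Int.castRingHom ℂ) := by
    rw [hpQ, Polynomial.map_map,
      (RingHom.ext_int _ _ : (algebraMap ℚ ℂ).comp (Int.castRingHom ℚ) = Int.castRingHom ℂ)]
  rw [← hmap]
  exact Polynomial.nodup_roots hsepC
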